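/- On the set of leaves of a tree (a connected acyclic graph), the relation D(a,b;c,d) defined by 'the path from a to b is vertex-disjoint from the path from c to d' satisfies the D-set axioms (D1)-(D4). -/

import Mathlib

open SimpleGraph Walk

section TreeDRelAux

variable {V : Type*} {G : SimpleGraph V} (hT : G.IsTree) [DecidableEq V]

/-- The canonical (unique) path between two vertices of a tree. -/
noncomputable def treePath (a b : V) : G.Walk a b :=
  (hT.existsUnique_path a b).choose

lemma treePath_isPath (a b : V) : (treePath hT a b).IsPath :=
  (hT.existsUnique_path a b).choose_spec.1

lemma treePath_eq {a b : V} (p : G.Walk a b) (hp : p.IsPath) : p = treePath hT a b :=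
  (hT.existsUnique_path a b).choose_spec.2 p hp

lemma mem_treePath_symm {a b u : V} (h : u ∈ (treePath hT a b).support) :
    u ∈ (treePath hT b a).support := by
  have : (treePath hT a b).reverse = treePath hT b a :=
    treePath_eq hT _ ((treePath_isPath hT a b).reverse)
  rw [← this, support_reverse, List.mem_reverse]
  exact h

lemma treePath_takeUntil_eq {a b u : V} (h : u ∈ (treePath hT a b).support) :
    (treePath hT a b).takeUntil u h = treePath hT a u :=
  treePath_eq hT _ ((treePath_isPath hT a b).takeUntil h)

lemma treePath_dropUntil_eq {a b u : V} (h : u ∈ (treePath hT a b).support) :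
    (treePath hT a b).dropUntil u h = treePath hT u b :=
  treePath_eq hT _ ((treePath_isPath hT a b).dropUntil h)

lemma treePath_seg_left {a b u x : V} (h : u ∈ (treePath hT a b).support)
    (hx : x ∈ (treePath hT a u).support) : x ∈ (treePath hT a b).support := by
  rw [← treePath_takeUntil_eq hT h] at hx
  exact support_takeUntil_subset _ h hx

lemma treePath_seg_right {a b u x : V} (h : u ∈ (treePath hT a b).support)
    (hx : x ∈ (treePath hT u b).support) : x ∈ (treePath hT a b).support := by
  rw [← treePath_dropUntil_eq hT h] at hx
  exact support_dropUntil_subset _ h hx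

lemma treePath_cover {a b u x : V} (h : u ∈ (treePath hT a b).support)
    (hx : x ∈ (treePath hT a b).support) :
    x ∈ (treePath hT a u).support ∨ x ∈ (treePath hT u b).support := by
  rw [← treePath_takeUntil_eq hT h, ← treePath_dropUntil_eq hT h]
  rw [← take_spec (treePath hT a b) h, mem_support_append_iff] at hx
  exact hx

lemma treePath_split_eq {a b u x : V} (h : u ∈ (treePath hT a b).support)
    (hx1 : x ∈ (treePath hT a u).support) (hx2 : x ∈ (treePath hT u b).support) :
    x = u := by
  rw [← treePath_takeUntil_eq hT h] at hx1
  rw [← treePath_dropUntil_eq hT h] at hx2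
  have hnd : (treePath hT a b).support.Nodup := (treePath_isPath hT a b).2
  rw [← take_spec (treePath hT a b) h, support_append] at hnd
  have hdisj := List.disjoint_of_nodup_append hnd
  by_contra hne
  have : x ∈ ((treePath hT a b).dropUntil u h).support.tail := by
    rw [support_eq_cons] at hx2
    rcases List.mem_cons.mp hx2 with h' | h'
    · exact absurd h' hne
    · exact h'
  exact hdisj hx1 this

lemma treePath_tri {a b c x : V} (hx : x ∈ (treePath hT a c).support) :
    x ∈ (treePath hT a b).support ∨ x ∈ (treePath hT b c).support := by
  classical
  have hb : ((treePath hT a b).append (treePath hT b c)).bypass = treePath hT a c :=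
    treePath_eq hT _ (bypass_isPath _)
  rw [← hb] at hx
  have := support_bypass_subset _ hx
  rw [mem_support_append_iff] at this
  exact this

/-- First-hit lemma: given a walk from `a` to `b` with `b ∈ S`, there is a vertex `m`
on the walk lying in `S` together with a path from `a` to `m` meeting `S` only in `m`. -/
lemma firstHit {a b : V} (R : G.Walk a b) (S : Set V) (hb : b ∈ S) :
    ∃ m, m ∈ R.support ∧ m ∈ S ∧
      ∃ Q : G.Walk a m, Q.IsPath ∧ ∀ u ∈ Q.support, u ∈ S → u = m := by
  classical
  induction R with
  | nil =>
    exact ⟨_, by simp, hb, Walk.nil, by simp, by simp⟩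
  | @cons a c b h R' ih =>
    by_cases ha : a ∈ S
    · exact ⟨a, start_mem_support _, ha, Walk.nil, by simp, by simp⟩
    · obtain ⟨m, hmR, hmS, Q', hQ', hQ'S⟩ := ih hb
      by_cases haQ : a ∈ Q'.support
      · refine ⟨m, by simp [hmR], hmS, Q'.dropUntil a haQ, hQ'.dropUntil haQ, ?_⟩
        intro u hu huS
        exact hQ'S u (support_dropUntil_subset _ haQ hu) huS
      · refine ⟨m, by simp [hmR], hmS, Walk.cons h Q', hQ'.cons haQ, ?_⟩
        intro u hu huS
        rw [support_cons, List.mem_cons] at hu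
        rcases hu with rfl | hu
        · exact absurd huS ha
        · exact hQ'S u hu huS

/-- Median: any three vertices of a tree have a common vertex on the three pairwise paths. -/
lemma treeMedian (a b c : V) :
    ∃ m, m ∈ (treePath hT a b).support ∧ m ∈ (treePath hT b c).support ∧
      m ∈ (treePath hT a c).support := by
  obtain ⟨m, hmR, hmS, Q, hQ, hQS⟩ :=
    firstHit (treePath hT a b) {v | v ∈ (treePath hT b c).support}
      (start_mem_support _)
  refine ⟨m, hmR, hmS, ?_⟩
  set D := (treePath hT b c).dropUntil m hmS with hD
  have hDpath : D.IsPath := (treePath_isPath hT b c).dropUntil hmS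
  have hW : (Q.append D).IsPath := by
    rw [isPath_def, support_append]
    refine List.Nodup.append hQ.2 (hDpath.2.sublist (List.tail_sublist _)) ?_
    intro x hxQ hxD
    have hx : x ∈ D.support := List.mem_of_mem_tail hxD
    have hxS : x ∈ (treePath hT b c).support := support_dropUntil_subset _ hmS hx
    have := hQS x hxQ hxS
    subst this
    have : D.support.Nodup := hDpath.2
    rw [support_eq_cons] at this
    exact (List.nodup_cons.mp this).1 hxD
  have : Q.append D = treePath hT a c := treePath_eq hT _ hW
  rw [← this, mem_support_append_iff]
  exact Or.inl (end_mem_support _)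

include hT in
/-- helper -/
lemma leaf_not_mem_path {w x y : V} (hy : ∃! u, G.Adj y u) (hw : w ≠ y) (hx : x ≠ y)
    {p : G.Walk w x} (hp : p.IsPath) : y ∉ p.support := by
  intro hmem
  have hpP : p = treePath hT w x := treePath_eq hT p hp
  subst hpP
  -- the two pieces
  have ht : (treePath hT w y).reverse.IsPath := (treePath_isPath hT w y).reverse
  obtain ⟨u1, h1, q1, hq1⟩ :=
    Walk.not_nil_iff.mp (Walk.not_nil_of_ne (fun h => hw h.symm) (p := (treePath hT w y).reverse))
  obtain ⟨u2, h2, q2, hq2⟩ :=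
    Walk.not_nil_iff.mp (Walk.not_nil_of_ne (fun h => hx (h.symm)) (p := treePath hT y x))
  -- u1 and u2 are both neighbors of y, hence equal
  obtain ⟨u, -, huniq⟩ := hy
  have hu12 : u1 = u2 := (huniq u1 h1).trans (huniq u2 h2).symm
  -- u1 lies on the path from w to y
  have hu1t : u1 ∈ (treePath hT w y).support := by
    have : u1 ∈ (treePath hT w y).reverse.support := by
      rw [hq1, support_cons]
      exact List.mem_cons_of_mem _ (start_mem_support _)
    rwa [support_reverse, List.mem_reverse] at this
  have hu2d : u2 ∈ (treePath hT y x).support := by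
    rw [hq2, support_cons]
    exact List.mem_cons_of_mem _ (start_mem_support _)
  have := treePath_split_eq hT hmem hu1t (hu12 ▸ hu2d)
  exact h1.ne' this

end TreeDRelAux

/-- A D-relation: 4-ary relation satisfying axioms (D1)-(D4). -/
structure IsDRel {α : Type*} (D : α → α → α → α → Prop) : Prop where
  d1 : ∀ w x y z : α, D w x y z → D x w y z ∧ D y z w x
  d2 : ∀ w x y z : α, D w x y z → ¬ D w y x z
  d3 : ∀ w x y z : α, D w x y z → ∀ v, D v x y z ∨ D w x y v
  d4 : ∀ w x y z : α, w ≠ y → x ≠ y → D w x y y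

/-- On the leaves of a tree, the relation "the path from a to b is vertex-disjoint
from the path from c to d" satisfies the D-set axioms (D1)-(D4). -/
theorem tree_leaves_isDRel {V : Type*} (G : SimpleGraph V) (hT : G.IsTree) :
    IsDRel (fun a b c d : {v : V // ∃! u, G.Adj v u} =>
      ∀ (p : G.Walk a.1 b.1) (q : G.Walk c.1 d.1), p.IsPath → q.IsPath →
        ∀ v : V, v ∈ p.support → v ∉ q.support) := by
  classical
  -- translate between the ∀-paths form and the canonical-path form
  have key : ∀ a b c d : V,
      (∀ (p : G.Walk a b) (q : G.Walk c d), p.IsPath → q.IsPath →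
        ∀ v : V, v ∈ p.support → v ∉ q.support) ↔
      (∀ v : V, v ∈ (treePath hT a b).support → v ∉ (treePath hT c d).support) := by
    intro a b c d
    constructor
    · intro h v hv
      exact h _ _ (treePath_isPath hT a b) (treePath_isPath hT c d) v hv
    · intro h p q hp hq v hvp hvq
      rw [treePath_eq hT p hp] at hvp
      rw [treePath_eq hT q hq] at hvq
      exact h v hvp hvq
  constructor
  · -- d1
    intro w x y z hD
    constructor
    · intro p q hp hq v hvp hvq
      refine hD p.reverse q hp.reverse hq v ?_ hvq
      rwa [support_reverse, List.mem_reverse]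
    · intro p q hp hq v hvp hvq
      exact hD q p hq hp v hvq hvp
  · -- d2
    intro w x y z hD hC
    rw [key] at hD hC
    obtain ⟨m, hm1, hm2, hm3⟩ := treeMedian hT (w : V) x y
    obtain ⟨k, hk1, hk2, hk3⟩ := treeMedian hT (x : V) y z
    -- k ∈ P x y; split at m
    rcases treePath_cover hT hm2 hk1 with hk | hk
    · -- k ∈ P x m ⊆ P x w = P w x, contradicting disjointness with P y z
      have : k ∈ (treePath hT (x : V) w).support :=
        treePath_seg_left hT (mem_treePath_symm hT hm1) hk
      exact hD k (mem_treePath_symm hT this) hk2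
    · -- k ∈ P m y ⊆ P w y, so k is common to P w y and P x z
      have hkwy : k ∈ (treePath hT (w : V) y).support :=
        treePath_seg_right hT hm3 hk
      exact hC k hkwy hk3
  · -- d3
    intro w x y z hD v
    rw [key] at hD
    by_contra hcon
    obtain ⟨h1, h2⟩ := not_or.mp hcon
    rw [key] at h1 h2
    push_neg at h1 h2
    obtain ⟨m, hm1, hm2⟩ := h1
    obtain ⟨n, hn1, hn2⟩ := h2
    -- m ∉ P n x since P n x ⊆ P w x and m ∈ P y z
    have hmnx : m ∉ (treePath hT (n : V) (x : V)).support := by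
      intro h
      exact hD m (treePath_seg_right hT hn1 h) hm2
    -- so m ∈ P v n, hence m ∈ P n v ⊆ P y v
    have hmvn : m ∈ (treePath hT (v : V) n).support := by
      rcases treePath_tri hT (b := (n : V)) hm1 with h | h
      · exact h
      · exact absurd h hmnx
    have hmnv : m ∈ (treePath hT (n : V) (v : V)).support := mem_treePath_symm hT hmvn
    have hmyv : m ∈ (treePath hT (y : V) (v : V)).support :=
      treePath_seg_right hT hn2 hmnv
    -- split P y v at m
    rcases treePath_cover hT hmyv hn2 with hn | hn
    · -- n ∈ P y m ⊆ P y z, contradiction with n ∈ P w x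
      have : n ∈ (treePath hT (y : V) (z : V)).support :=
        treePath_seg_left hT hm2 hn
      exact hD n hn1 this
    · -- n ∈ P m v; combined with m ∈ P n v get n = m
      have : (n : V) = m :=
        treePath_split_eq hT hmnv (start_mem_support _) hn
      exact hD n hn1 (this ▸ hm2)
  · -- d4
    intro w x y z hwy hxy p q hp hq u hup huq
    have hq' : q = Walk.nil := Walk.isPath_iff_eq_nil.mp hq
    subst hq'
    rw [Walk.mem_support_nil_iff] at huq
    subst huq
    have hwy' : (w : V) ≠ (y : V) := fun h => hwy (Subtype.ext h)
    have hxy' : (x : V) ≠ (y : V) := fun h => hxy (Subtype.ext h)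
    exact leaf_not_mem_path hT y.2 hwy' hxy' hp hup
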